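/- (Lemma 1) Let g > 0 and suppose both channel gains are equal: g1 = g2 = g. Then for any real R, E_PNC(R) ≤ E_DNC(R) if and only if R ≥ 1. -/

import Mathlib

/-- PNC uplink energy usage: `E_PNC(R) = (2^R - 1/2) * (1/g1 + 1/g2)`. -/
noncomputable def EPNC (g1 g2 R : ℝ) : ℝ := ((2 : ℝ) ^ R - 1 / 2) * (1 / g1 + 1 / g2)

/-- SPC-DNC uplink energy usage:
`E_DNC(R) = (2^R - 1)/gm + 2^R (2^R - 1)/gM` with `gm = min g1 g2`, `gM = max g1 g2`. -/
noncomputable def EDNC (g1 g2 R : ℝ) : ℝ :=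
  ((2 : ℝ) ^ R - 1) / min g1 g2 + (2 : ℝ) ^ R * ((2 : ℝ) ^ R - 1) / max g1 g2

theorem stmt_2 (g : ℝ) (hg : 0 < g) (R : ℝ) :
    EPNC g g R ≤ EDNC g g R ↔ 1 ≤ R := by
  have hx : (0:ℝ) < (2:ℝ) ^ R := Real.rpow_pos_of_pos (by norm_num) R
  have key : ((2:ℝ) ^ R - 1/2) * (1/g + 1/g) ≤
      ((2:ℝ) ^ R - 1) / g + (2:ℝ) ^ R * ((2:ℝ) ^ R - 1) / g ↔
      (2:ℝ) ≤ (2:ℝ) ^ R := by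
    rw [← add_div, ← mul_div_assoc, ← add_div, div_le_div_iff_of_pos_right hg]
    constructor
    · intro h
      nlinarith [hx, mul_pos hx hx]
    · intro h
      nlinarith [hx]
  have h2 : ((2:ℝ) ≤ (2:ℝ) ^ R ↔ 1 ≤ R) := by
    rw [show ((2:ℝ) ≤ (2:ℝ)^R) ↔ ((2:ℝ)^(1:ℝ) ≤ (2:ℝ)^R) by norm_num,
      Real.rpow_le_rpow_left_iff (by norm_num)]
  rw [EPNC, EDNC, min_self, max_self, key, h2]
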